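/- Let X = {a,b,c} with topology τ = {∅, {a,b}, X} and A = {b,c}. Then A is sg-closed in X, but A × A is not sg-closed in X × X. -/

import Mathlib

open Set Topology

def t3 : TopologicalSpace (Fin 3) := TopologicalSpace.generateFrom {({0, 1} : Set (Fin 3))}

attribute [local instance] t3

lemma t3_open_mem {U : Set (Fin 3)} (h : IsOpen U) :
    ∀ x ∈ U, (0 : Fin 3) ∈ U ∧ (1 : Fin 3) ∈ U := by
  have h' : TopologicalSpace.GenerateOpen {({0, 1} : Set (Fin 3))} U := h
  clear h
  induction h' with
  | basic s hs =>
    simp only [Set.mem_singleton_iff] at hs; subst hs; intro x hx; simp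
  | univ => intro x _; simp
  | inter u v hu hv ihu ihv =>
    intro x hx
    exact ⟨⟨(ihu x hx.1).1, (ihv x hx.2).1⟩, (ihu x hx.1).2, (ihv x hx.2).2⟩
  | sUnion s hs ih =>
    intro x hx
    obtain ⟨u, hu, hxu⟩ := hx
    exact ⟨⟨u, hu, (ih u hu x hxu).1⟩, ⟨u, hu, (ih u hu x hxu).2⟩⟩

lemma dense_of_mem11 {s : Set (Fin 3 × Fin 3)} (h : ((1:Fin 3),(1:Fin 3)) ∈ s) :
    closure s = univ := by
  rw [eq_univ_iff_forall]
  intro p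
  rw [mem_closure_iff]
  intro o ho hpo
  obtain ⟨u, v, hu, hv, h1, h2, huv⟩ := isOpen_prod_iff.mp ho p.1 p.2 hpo
  exact ⟨((1:Fin 3),(1:Fin 3)), huv ⟨(t3_open_mem hu p.1 h1).2, (t3_open_mem hv p.2 h2).2⟩, h⟩

def SemiOpen {X : Type*} [TopologicalSpace X] (A : Set X) : Prop :=
  A ⊆ closure (interior A)

def SemiClosed {X : Type*} [TopologicalSpace X] (A : Set X) : Prop :=
  interior (closure A) ⊆ A

def scl {X : Type*} [TopologicalSpace X] (A : Set X) : Set X :=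
  ⋂₀ {S | SemiClosed S ∧ A ⊆ S}

def sker {X : Type*} [TopologicalSpace X] (A : Set X) : Set X :=
  ⋂₀ {S | SemiOpen S ∧ A ⊆ S}

def sint {X : Type*} [TopologicalSpace X] (A : Set X) : Set X :=
  ⋃₀ {S | SemiOpen S ∧ S ⊆ A}

def SgOpen {X : Type*} [TopologicalSpace X] (A : Set X) : Prop :=
  ∀ F : Set X, SemiClosed F → F ⊆ A → F ⊆ sint A

def SgClosed {X : Type*} [TopologicalSpace X] (A : Set X) : Prop :=
  scl A ⊆ sker A

def HSgClosed {X : Type*} [TopologicalSpace X] (A : Set X) : Prop :=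
  ∀ B : Set X, B ⊆ A → SgClosed B

def SgCompact (X : Type*) [TopologicalSpace X] : Prop :=
  ∀ 𝒰 : Set (Set X), (∀ U ∈ 𝒰, SgOpen U) → ⋃₀ 𝒰 = Set.univ →
    ∃ F ⊆ 𝒰, F.Finite ∧ ⋃₀ F = Set.univ

def LocallyIndiscrete (X : Type*) [TopologicalSpace X] : Prop :=
  ∀ U : Set X, IsOpen U → IsClosed U

def IndiscreteSpace (X : Type*) [TopologicalSpace X] : Prop :=
  ∀ U : Set X, IsOpen U → U = ∅ ∨ U = Set.univ

theorem stmt_14 :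
    let t : TopologicalSpace (Fin 3) := TopologicalSpace.generateFrom {({0, 1} : Set (Fin 3))}
    let A : Set (Fin 3) := {1, 2}
    @SgClosed (Fin 3) t A ∧
      ¬ @SgClosed (Fin 3 × Fin 3) (@instTopologicalSpaceProd _ _ t t) (A ×ˢ A) := by
  intro t A
  constructor
  · -- A is sg-closed
    intro x _ S hS
    obtain ⟨hso, hAS⟩ := hS
    have h2 : (2 : Fin 3) ∈ S := hAS (by simp [A])
    by_cases hi : interior S = (∅ : Set (Fin 3))
    · exact absurd (hso h2) (by rw [hi, closure_empty]; exact notMem_empty _)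
    · obtain ⟨y, hy⟩ := nonempty_iff_ne_empty.mpr hi
      have h01 := t3_open_mem (isOpen_interior (s := S)) y hy
      have h0 : (0 : Fin 3) ∈ S := interior_subset h01.1
      have h1 : (1 : Fin 3) ∈ S := interior_subset h01.2
      fin_cases x <;> assumption
  · -- A ×ˢ A is not sg-closed
    intro hcon
    have hpscl : ((0 : Fin 3), (2 : Fin 3)) ∈ scl (A ×ˢ A) := by
      intro F hF
      obtain ⟨hFsc, hAF⟩ := hF
      have hclF : closure F = univ := by
        apply eq_univ_of_univ_subset
        rw [← dense_of_mem11 (s := A ×ˢ A) (by simp [A])]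
        exact closure_mono hAF
      have : (univ : Set (Fin 3 × Fin 3)) ⊆ F := by
        rw [← interior_univ, ← hclF]; exact hFsc
      exact this (mem_univ _)
    have hpsker := hcon hpscl
    set B : Set (Fin 3 × Fin 3) := ({0, 1} : Set (Fin 3)) ×ˢ ({0, 1} : Set (Fin 3)) with hB
    have hBopen : IsOpen B := by
      exact IsOpen.prod
        (TopologicalSpace.GenerateOpen.basic _ (mem_singleton _))
        (TopologicalSpace.GenerateOpen.basic _ (mem_singleton _))
    have hS : SemiOpen (B ∪ A ×ˢ A) := by
      intro p _
      have hBint : B ⊆ interior (B ∪ A ×ˢ A) :=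
        interior_maximal subset_union_left hBopen
      have : closure B ⊆ closure (interior (B ∪ A ×ˢ A)) := closure_mono hBint
      exact this (eq_univ_iff_forall.mp (dense_of_mem11 (s := B) (by simp [hB])) p)
    have hmem := hpsker (B ∪ A ×ˢ A) ⟨hS, subset_union_right⟩
    rcases hmem with h | h
    · exact absurd h.2 (by decide)
    · exact absurd h.1 (by simp [A])
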